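/- Let B and B̂ be symmetric n×n matrices, B of rank d with smallest nonzero eigenvalue (in magnitude) at least λ > 0, and let U, Û ∈ ℝ^{n×d} contain orthonormal eigenvectors corresponding to the top-d eigenvalues (by magnitude) of B and B̂ respectively. If ‖B̂ − B‖ ≤ λ/4, then ‖sin Θ(U, Û)‖ ≤ 2‖B̂ − B‖/λ. -/

import Mathlib

open Matrix

noncomputable def specNorm {m n : Type*} [Fintype m] [Fintype n] [DecidableEq n]
    (A : Matrix m n ℝ) : ℝ :=
  ‖LinearMap.toContinuousLinearMap (Matrix.toEuclideanLin A)‖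

/-- The spectral norm characterization ‖sin Θ(U, Û)‖ = ‖(I − ÛÛᵀ)U‖ of the matrix of
principal angles between the column spaces of two matrices with orthonormal columns. -/
noncomputable def sinThetaNorm {n d : ℕ} (U Uhat : Matrix (Fin n) (Fin d) ℝ) : ℝ :=
  specNorm ((1 - Uhat * Uhatᵀ) * U)

open scoped Matrix.Norms.L2Operator

section Helpers

variable {m n : ℕ}

lemma dot_sq (y : Fin m → ℝ) :
    y ⬝ᵥ y = ‖(WithLp.equiv 2 (Fin m → ℝ)).symm y‖ ^ 2 := by
  rw [EuclideanSpace.norm_eq]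
  rw [Real.sq_sqrt (by positivity)]
  simp [dotProduct, Real.norm_eq_abs, sq_abs, pow_two]

lemma mulVec_dot_le (A : Matrix (Fin m) (Fin n) ℝ) (y : Fin n → ℝ) :
    (A *ᵥ y) ⬝ᵥ (A *ᵥ y) ≤ ‖A‖ ^ 2 * (y ⬝ᵥ y) := by
  rw [dot_sq, dot_sq]
  have h := (LinearMap.toContinuousLinearMap (Matrix.toEuclideanLin A)).le_opNorm
      ((WithLp.equiv 2 (Fin n → ℝ)).symm y)
  have hA : ‖LinearMap.toContinuousLinearMap (Matrix.toEuclideanLin A)‖ = ‖A‖ := rfl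
  have he : LinearMap.toContinuousLinearMap (Matrix.toEuclideanLin A)
      ((WithLp.equiv 2 (Fin n → ℝ)).symm y) = (WithLp.equiv 2 (Fin m → ℝ)).symm (A *ᵥ y) := rfl
  rw [he, hA] at h
  have h0 : (0:ℝ) ≤ ‖(WithLp.equiv 2 (Fin m → ℝ)).symm (A *ᵥ y)‖ := norm_nonneg _
  have h2 : (0:ℝ) ≤ ‖(WithLp.equiv 2 (Fin n → ℝ)).symm y‖ := norm_nonneg _
  have h1 : (0:ℝ) ≤ ‖A‖ := norm_nonneg A
  nlinarith

lemma norm_diagonal_le {c : ℝ} (hc : 0 ≤ c) (w : Fin n → ℝ) (hw : ∀ i, |w i| ≤ c) :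
    ‖(Matrix.diagonal w : Matrix (Fin n) (Fin n) ℝ)‖ ≤ c := by
  rw [Matrix.l2_opNorm_def]
  apply ContinuousLinearMap.opNorm_le_bound _ hc
  intro x
  set y := WithLp.equiv 2 (Fin n → ℝ) x with hy
  show ‖(WithLp.equiv 2 (Fin n → ℝ)).symm ((Matrix.diagonal w) *ᵥ y)‖ ≤ c * ‖x‖
  have h1 : ‖(WithLp.equiv 2 (Fin n → ℝ)).symm ((Matrix.diagonal w) *ᵥ y)‖
      = Real.sqrt (∑ i, (w i * y i)^2) := by
    rw [EuclideanSpace.norm_eq]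
    simp [Real.norm_eq_abs, sq_abs, mul_pow, Matrix.mulVec_diagonal]
  have h2 : ‖x‖ = Real.sqrt (∑ i, (y i)^2) := by
    rw [EuclideanSpace.norm_eq]
    simp [Real.norm_eq_abs, sq_abs, hy]
  rw [h1, h2]
  have h3 : (∑ i, (w i * y i)^2) ≤ c^2 * ∑ i, (y i)^2 := by
    rw [Finset.mul_sum]
    apply Finset.sum_le_sum
    intro i _
    nlinarith [mul_nonneg (mul_nonneg (sub_nonneg.2 (hw i))
      (by positivity : (0:ℝ) ≤ c + |w i|)) (sq_nonneg (y i)), sq_abs (w i)]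
  calc Real.sqrt (∑ i, (w i * y i)^2) ≤ Real.sqrt (c^2 * ∑ i, (y i)^2) := Real.sqrt_le_sqrt h3
    _ = c * Real.sqrt (∑ i, (y i)^2) := by
        rw [Real.sqrt_mul (sq_nonneg c), Real.sqrt_sq hc]

lemma norm_one_le {k : ℕ} : ‖(1 : Matrix (Fin k) (Fin k) ℝ)‖ ≤ 1 := by
  rw [Matrix.l2_opNorm_def]
  apply ContinuousLinearMap.opNorm_le_bound _ zero_le_one
  intro x
  show ‖(WithLp.equiv 2 (Fin k → ℝ)).symm ((1 : Matrix (Fin k) (Fin k) ℝ) *ᵥ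
      (WithLp.equiv 2 (Fin k → ℝ) x))‖ ≤ 1 * ‖x‖
  rw [Matrix.one_mulVec]
  simp

lemma norm_le_one_of_orth {k : ℕ} (V : Matrix (Fin m) (Fin k) ℝ) (hV : Vᵀ * V = 1) :
    ‖V‖ ≤ 1 := by
  have h1 : ‖Vᴴ * V‖ = ‖V‖ * ‖V‖ := Matrix.l2_opNorm_conjTranspose_mul_self V
  have h2 : Vᴴ = Vᵀ := Matrix.conjTranspose_eq_transpose_of_trivial V
  rw [h2, hV] at h1
  have h3 : ‖(1 : Matrix (Fin k) (Fin k) ℝ)‖ ≤ 1 := norm_one_le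
  nlinarith [norm_nonneg V]

lemma norm_transpose_le_one {k : ℕ} (V : Matrix (Fin m) (Fin k) ℝ) (hV : Vᵀ * V = 1) :
    ‖Vᵀ‖ ≤ 1 := by
  have h2 : Vᴴ = Vᵀ := Matrix.conjTranspose_eq_transpose_of_trivial V
  rw [← h2, Matrix.l2_opNorm_conjTranspose]
  exact norm_le_one_of_orth V hV

lemma norm_mul_left_orth {k l : ℕ} (V : Matrix (Fin m) (Fin k) ℝ) (hV : Vᵀ * V = 1)
    (X : Matrix (Fin k) (Fin l) ℝ) : ‖V * X‖ = ‖X‖ := by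
  apply le_antisymm
  · calc ‖V * X‖ ≤ ‖V‖ * ‖X‖ := Matrix.l2_opNorm_mul V X
      _ ≤ 1 * ‖X‖ := by
          have := norm_le_one_of_orth V hV
          have := norm_nonneg X
          nlinarith
      _ = ‖X‖ := one_mul _
  · have h : X = Vᵀ * (V * X) := by rw [← Matrix.mul_assoc, hV, Matrix.one_mul]
    calc ‖X‖ = ‖Vᵀ * (V * X)‖ := by rw [← h]
      _ ≤ ‖Vᵀ‖ * ‖V * X‖ := Matrix.l2_opNorm_mul _ _
      _ ≤ 1 * ‖V * X‖ := by
          have := norm_transpose_le_one V hV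
          have := norm_nonneg (V * X)
          nlinarith
      _ = ‖V * X‖ := one_mul _

open Matrix
open scoped Matrix.Norms.L2Operator

lemma key_nu_le {n : ℕ} {ι : Type*} [Fintype ι] [DecidableEq ι]
    (B Bhat : Matrix (Fin n) (Fin n) ℝ)
    (W : Matrix (Fin n) ι ℝ) (w : ι → ℝ) (μ : ℝ) (hμ : 0 ≤ μ)
    (hW : Wᵀ * W = 1) (hBW : Bhat * W = W * Matrix.diagonal w)
    (hw : ∀ c, μ ≤ |w c|)
    (hcard : n < Fintype.card ι + (n - B.rank)) :
    μ ≤ ‖Bhat - B‖ := by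
  classical
  -- rank-nullity
  have hrn : B.rank + Module.finrank ℝ (LinearMap.ker B.mulVecLin) = n := by
    have := LinearMap.finrank_range_add_finrank_ker B.mulVecLin
    rw [Module.finrank_pi, Fintype.card_fin] at this
    rw [Matrix.rank]
    exact this
  -- W injective
  have hinj : Function.Injective W.mulVecLin := by
    intro a b hab
    have : Wᵀ *ᵥ (W *ᵥ a) = Wᵀ *ᵥ (W *ᵥ b) := by
      simp only [Matrix.mulVecLin_apply] at hab
      rw [hab]
    rwa [Matrix.mulVec_mulVec, Matrix.mulVec_mulVec, hW, Matrix.one_mulVec,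
      Matrix.one_mulVec] at this
  have hrange : Module.finrank ℝ (LinearMap.range W.mulVecLin) = Fintype.card ι := by
    rw [LinearMap.finrank_range_of_inj hinj, Module.finrank_pi]
  -- intersection nontrivial
  set p := LinearMap.range W.mulVecLin
  set q := LinearMap.ker B.mulVecLin
  have hsum := Submodule.finrank_sup_add_finrank_inf_eq p q
  have hle : Module.finrank ℝ ↥(p ⊔ q) ≤ n := by
    have := Submodule.finrank_le (p ⊔ q)
    rwa [Module.finrank_pi, Fintype.card_fin] at this
  have hq : Module.finrank ℝ q = n - B.rank := by omega
  have hpos : 0 < Module.finrank ℝ ↥(p ⊓ q) := by omega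
  have hne : p ⊓ q ≠ ⊥ := by
    intro hbot
    rw [hbot, finrank_bot] at hpos
    exact lt_irrefl 0 hpos
  obtain ⟨x, hx, hx0⟩ := Submodule.exists_mem_ne_zero_of_ne_bot hne
  obtain ⟨hxp, hxq⟩ := Submodule.mem_inf.mp hx
  obtain ⟨a, ha⟩ := hxp
  have hBx : B *ᵥ x = 0 := hxq
  have ha' : W *ᵥ a = x := ha
  have ha0 : a ≠ 0 := by
    intro h0
    apply hx0
    rw [← ha', h0, Matrix.mulVec_zero]
  -- dot products
  have horth : ∀ b : ι → ℝ, (W *ᵥ b) ⬝ᵥ (W *ᵥ b) = b ⬝ᵥ b := by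
    intro b
    calc (W *ᵥ b) ⬝ᵥ (W *ᵥ b) = ((W *ᵥ b) ᵥ* W) ⬝ᵥ b := Matrix.dotProduct_mulVec _ _ _
      _ = (Wᵀ *ᵥ (W *ᵥ b)) ⬝ᵥ b := by rw [Matrix.mulVec_transpose]
      _ = b ⬝ᵥ b := by rw [Matrix.mulVec_mulVec, hW, Matrix.one_mulVec]
  have ht : 0 < a ⬝ᵥ a := by
    have hnn : 0 ≤ a ⬝ᵥ a := Finset.sum_nonneg fun i _ => mul_self_nonneg (a i)
    rcases hnn.lt_or_eq with h | h
    · exact h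
    · exact absurd (dotProduct_self_eq_zero.mp h.symm) ha0
  -- Bhat x = W (diag w a)
  have hBhx : Bhat *ᵥ x = W *ᵥ (Matrix.diagonal w *ᵥ a) := by
    rw [← ha', Matrix.mulVec_mulVec, hBW, ← Matrix.mulVec_mulVec]
  -- lower bound
  have hlow : μ^2 * (a ⬝ᵥ a) ≤ (Bhat *ᵥ x) ⬝ᵥ (Bhat *ᵥ x) := by
    rw [hBhx, horth]
    have : ∀ i, μ^2 * (a i * a i) ≤ (w i * a i) * (w i * a i) := by
      intro i
      nlinarith [mul_nonneg (mul_nonneg (sub_nonneg.2 (hw i))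
        (by positivity : (0:ℝ) ≤ μ + |w i|)) (sq_nonneg (a i)), sq_abs (w i), sq_nonneg (a i)]
    calc μ^2 * (a ⬝ᵥ a) = ∑ i, μ^2 * (a i * a i) := by
          rw [dotProduct, Finset.mul_sum]
      _ ≤ ∑ i, (w i * a i) * (w i * a i) := Finset.sum_le_sum fun i _ => this i
      _ = (Matrix.diagonal w *ᵥ a) ⬝ᵥ (Matrix.diagonal w *ᵥ a) := by
          simp [dotProduct, Matrix.mulVec_diagonal]
  -- upper bound
  have hup : (Bhat *ᵥ x) ⬝ᵥ (Bhat *ᵥ x) ≤ ‖Bhat - B‖^2 * (a ⬝ᵥ a) := by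
    have hsub : (Bhat - B) *ᵥ x = Bhat *ᵥ x := by
      rw [Matrix.sub_mulVec, hBx, sub_zero]
    have h1 := mulVec_dot_le (Bhat - B) x
    rw [hsub] at h1
    have hxx : x ⬝ᵥ x = a ⬝ᵥ a := by rw [← ha', horth]
    rwa [hxx] at h1
  have h2 : μ^2 ≤ ‖Bhat - B‖^2 :=
    le_of_mul_le_mul_right (by linarith [hlow.trans hup]) ht
  have h3 := Real.sqrt_le_sqrt h2
  rwa [Real.sqrt_sq hμ, Real.sqrt_sq (norm_nonneg _)] at h3

end Helpers

/-- Davis–Kahan.  B is symmetric of rank d with nonzero eigenvalues of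
magnitude at least λ₀; U holds orthonormal eigenvectors of those eigenvalues; Û holds
orthonormal eigenvectors of the top-d (by magnitude) eigenvalues of the symmetric B̂
(the remaining eigenvalues, listed through an orthonormal complement V, are no larger
in magnitude).  If ‖B̂ − B‖ ≤ λ₀/4 then ‖sin Θ(U, Û)‖ ≤ 2‖B̂ − B‖/λ₀. -/
theorem stmt11 {n d : ℕ} (B Bhat : Matrix (Fin n) (Fin n) ℝ)
    (hB : B.IsSymm) (hBhat : Bhat.IsSymm) (hrank : B.rank = d)
    (lam0 : ℝ) (hlam0 : 0 < lam0)
    (U Uhat : Matrix (Fin n) (Fin d) ℝ)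
    (lam lamhat : Fin d → ℝ)
    (hUorth : Uᵀ * U = 1) (hUhatorth : Uhatᵀ * Uhat = 1)
    (hUeig : B * U = U * Matrix.diagonal lam)
    (hUhateig : Bhat * Uhat = Uhat * Matrix.diagonal lamhat)
    (hlam : ∀ k, lam0 ≤ |lam k|)
    (V : Matrix (Fin n) (Fin (n - d)) ℝ) (ν : Fin (n - d) → ℝ)
    (hVorth : Vᵀ * V = 1) (hVperp : Uhatᵀ * V = 0)
    (hVeig : Bhat * V = V * Matrix.diagonal ν)
    (htop : ∀ j k, |ν j| ≤ |lamhat k|)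
    (hpert : specNorm (Bhat - B) ≤ lam0 / 4) :
    sinThetaNorm U Uhat ≤ 2 * specNorm (Bhat - B) / lam0 := by
  classical
  have hpert' : ‖Bhat - B‖ ≤ lam0 / 4 := hpert
  have hd : d ≤ n := by
    have h := B.rank_le_card_height
    rw [hrank, Fintype.card_fin] at h
    exact h
  -- Step 1 : each |ν j| is at most lam0/4
  have hnu : ∀ j, |ν j| ≤ lam0 / 4 := by
    intro j
    set ej : Matrix (Fin (n - d)) (Fin 1) ℝ :=
      Matrix.of (fun i (_ : Fin 1) => if i = j then (1:ℝ) else 0) with hej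
    set Vj := V * ej with hVj
    set W' := Matrix.fromCols Uhat Vj with hW'def
    have hUV : Uhatᵀ * Vj = 0 := by rw [hVj, ← Matrix.mul_assoc, hVperp, Matrix.zero_mul]
    have hVjU : Vjᵀ * Uhat = 0 := by
      have := congrArg Matrix.transpose hUV
      simpa [Matrix.transpose_mul] using this
    have hee : ejᵀ * ej = 1 := by
      ext a b
      simp [Matrix.mul_apply, hej, Matrix.one_apply, Subsingleton.elim a b]
    have hVjVj : Vjᵀ * Vj = 1 := by
      rw [hVj, Matrix.transpose_mul, Matrix.mul_assoc, ← Matrix.mul_assoc Vᵀ, hVorth,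
        Matrix.one_mul, hee]
    have hW' : W'ᵀ * W' = 1 := by
      rw [hW'def, Matrix.transpose_fromCols, Matrix.fromRows_mul_fromCols,
        hUhatorth, hUV, hVjU, hVjVj]
      exact Matrix.fromBlocks_one
    have hde : Matrix.diagonal ν * ej = ej * Matrix.diagonal (fun _ : Fin 1 => ν j) := by
      ext i a
      simp only [Matrix.diagonal_mul, Matrix.mul_diagonal, hej, Matrix.of_apply]
      by_cases h : i = j <;> simp [h]
    have hBVj : Bhat * Vj = Vj * Matrix.diagonal (fun _ : Fin 1 => ν j) := by
      rw [hVj, ← Matrix.mul_assoc, hVeig, Matrix.mul_assoc, hde, ← Matrix.mul_assoc]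
    have hBW' : Bhat * W' = W' * Matrix.diagonal (Sum.elim lamhat (fun _ : Fin 1 => ν j)) := by
      rw [hW'def, Matrix.mul_fromCols, hUhateig, hBVj, ← Matrix.fromBlocks_diagonal,
        Matrix.fromCols_mul_fromBlocks]
      simp
    have hcard' : n < Fintype.card (Fin d ⊕ Fin 1) + (n - B.rank) := by
      rw [hrank]
      simp only [Fintype.card_sum, Fintype.card_fin]
      omega
    have hkey := key_nu_le B Bhat W' (Sum.elim lamhat (fun _ : Fin 1 => ν j)) (|ν j|)
      (abs_nonneg _) hW' hBW' ?_ hcard'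
    · exact hkey.trans hpert'
    · rintro (k | c)
      · simpa using htop j k
      · simp
  -- Step 2 : 1 - Uhat Uhatᵀ = V Vᵀ
  have hVU : Vᵀ * Uhat = 0 := by
    have := congrArg Matrix.transpose hVperp
    simpa [Matrix.transpose_mul] using this
  have heq : (1 : Matrix (Fin n) (Fin n) ℝ) - Uhat * Uhatᵀ = V * Vᵀ := by
    have h1 : Matrix.fromRows Uhatᵀ Vᵀ * Matrix.fromCols Uhat V = 1 := by
      rw [Matrix.fromRows_mul_fromCols, hUhatorth, hVorth, hVperp, hVU]
      exact Matrix.fromBlocks_one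
    have e : Fin n ≃ Fin d ⊕ Fin (n - d) :=
      (finCongr (Nat.add_sub_cancel' hd).symm).trans finSumFinEquiv.symm
    have h2 := (Matrix.fromCols_mul_fromRows_eq_one_comm e Uhat V Uhatᵀ Vᵀ).mpr h1
    rw [Matrix.fromCols_mul_fromRows] at h2
    rw [← h2, add_sub_cancel_left]
  -- Step 3 : sinThetaNorm = ‖Vᵀ U‖
  have hsin : sinThetaNorm U Uhat = ‖Vᵀ * U‖ := by
    have h3 : sinThetaNorm U Uhat = ‖(1 - Uhat * Uhatᵀ) * U‖ := rfl
    rw [h3, heq, Matrix.mul_assoc, norm_mul_left_orth V hVorth]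
  -- Step 4 : Sylvester relation
  set S := Vᵀ * U with hSdef
  set E := Vᵀ * (B - Bhat) * U with hEdef
  have hVBhat : Vᵀ * Bhat = Matrix.diagonal ν * Vᵀ := by
    have h4 : Vᵀ * Bhat = (Bhat * V)ᵀ := by rw [Matrix.transpose_mul, hBhat]
    rw [h4, hVeig, Matrix.transpose_mul, Matrix.diagonal_transpose]
  have hSyl : S * Matrix.diagonal lam = Matrix.diagonal ν * S + E := by
    have l1 : S * Matrix.diagonal lam = Vᵀ * B * U := by
      calc S * Matrix.diagonal lam = Vᵀ * (U * Matrix.diagonal lam) := by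
            rw [hSdef, Matrix.mul_assoc]
        _ = Vᵀ * (B * U) := by rw [hUeig]
        _ = Vᵀ * B * U := by rw [Matrix.mul_assoc]
    have l2 : Matrix.diagonal ν * S = Vᵀ * Bhat * U := by
      calc Matrix.diagonal ν * S = Matrix.diagonal ν * Vᵀ * U := by
            rw [hSdef, Matrix.mul_assoc]
        _ = Vᵀ * Bhat * U := by rw [← hVBhat]
    have l3 : E = Vᵀ * B * U - Vᵀ * Bhat * U := by
      rw [hEdef, Matrix.mul_sub, Matrix.sub_mul]
    rw [l1, l2, l3]
    abel
  -- Step 5 : invert diagonal lam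
  have hlamne : ∀ k, lam k ≠ 0 := by
    intro k h
    have := hlam k
    rw [h, abs_zero] at this
    linarith
  set Linv := Matrix.diagonal (fun k => (lam k)⁻¹) with hLinvdef
  have hLinv : Matrix.diagonal lam * Linv = 1 := by
    rw [hLinvdef, Matrix.diagonal_mul_diagonal]
    have : (fun k => lam k * (lam k)⁻¹) = fun _ => (1:ℝ) := by
      funext k
      exact mul_inv_cancel₀ (hlamne k)
    rw [this, Matrix.diagonal_one]
  have hS : S = Matrix.diagonal ν * S * Linv + E * Linv := by
    calc S = S * (Matrix.diagonal lam * Linv) := by rw [hLinv, Matrix.mul_one]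
      _ = S * Matrix.diagonal lam * Linv := (Matrix.mul_assoc S (Matrix.diagonal lam) Linv).symm
      _ = (Matrix.diagonal ν * S + E) * Linv := by rw [hSyl]
      _ = Matrix.diagonal ν * S * Linv + E * Linv := by rw [Matrix.add_mul]
  -- Step 6 : norm bounds
  have hDnorm : ‖Matrix.diagonal ν‖ ≤ lam0 / 4 := norm_diagonal_le (by linarith) ν hnu
  have hLnorm : ‖Linv‖ ≤ lam0⁻¹ := by
    apply norm_diagonal_le (by positivity)
    intro k
    rw [abs_inv]
    exact inv_anti₀ hlam0 (hlam k)
  have hEnorm : ‖E‖ ≤ ‖Bhat - B‖ := by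
    have a1 : ‖E‖ ≤ ‖Vᵀ * (B - Bhat)‖ * ‖U‖ := Matrix.l2_opNorm_mul _ _
    have a2 : ‖Vᵀ * (B - Bhat)‖ ≤ ‖Vᵀ‖ * ‖B - Bhat‖ := Matrix.l2_opNorm_mul _ _
    have a3 : ‖Vᵀ‖ ≤ 1 := norm_transpose_le_one V hVorth
    have a4 : ‖U‖ ≤ 1 := norm_le_one_of_orth U hUorth
    calc ‖E‖ ≤ ‖Vᵀ * (B - Bhat)‖ * ‖U‖ := a1
      _ ≤ ‖Vᵀ * (B - Bhat)‖ * 1 := mul_le_mul_of_nonneg_left a4 (norm_nonneg _)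
      _ = ‖Vᵀ * (B - Bhat)‖ := mul_one _
      _ ≤ ‖Vᵀ‖ * ‖B - Bhat‖ := a2
      _ ≤ 1 * ‖B - Bhat‖ := mul_le_mul_of_nonneg_right a3 (norm_nonneg _)
      _ = ‖Bhat - B‖ := by rw [one_mul, norm_sub_rev]
  have hSnorm : ‖S‖ ≤ ‖Matrix.diagonal ν‖ * ‖S‖ * ‖Linv‖ + ‖E‖ * ‖Linv‖ := by
    calc ‖S‖ = ‖Matrix.diagonal ν * S * Linv + E * Linv‖ := by rw [← hS]
      _ ≤ ‖Matrix.diagonal ν * S * Linv‖ + ‖E * Linv‖ := norm_add_le _ _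
      _ ≤ ‖Matrix.diagonal ν‖ * ‖S‖ * ‖Linv‖ + ‖E‖ * ‖Linv‖ := by
          have b1 : ‖Matrix.diagonal ν * S * Linv‖ ≤ ‖Matrix.diagonal ν * S‖ * ‖Linv‖ :=
            Matrix.l2_opNorm_mul _ _
          have b2 : ‖Matrix.diagonal ν * S‖ ≤ ‖Matrix.diagonal ν‖ * ‖S‖ :=
            Matrix.l2_opNorm_mul _ _
          have b3 : ‖E * Linv‖ ≤ ‖E‖ * ‖Linv‖ := Matrix.l2_opNorm_mul _ _
          have b4 : ‖Matrix.diagonal ν * S‖ * ‖Linv‖ ≤ ‖Matrix.diagonal ν‖ * ‖S‖ * ‖Linv‖ :=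
            mul_le_mul_of_nonneg_right b2 (norm_nonneg _)
          exact add_le_add (b1.trans b4) b3
  -- Step 7 : final arithmetic
  have hgoal : sinThetaNorm U Uhat ≤ 2 * ‖Bhat - B‖ / lam0 := by
    rw [hsin]
    have hc0 : (0:ℝ) ≤ ‖Bhat - B‖ := norm_nonneg _
    have hS0 : (0:ℝ) ≤ ‖S‖ := norm_nonneg _
    have hinv : (0:ℝ) < lam0⁻¹ := by positivity
    have c1 : ‖Matrix.diagonal ν‖ * ‖S‖ * ‖Linv‖ ≤ (lam0 / 4) * ‖S‖ * lam0⁻¹ := by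
      apply mul_le_mul _ hLnorm (norm_nonneg _) (by positivity)
      exact mul_le_mul hDnorm le_rfl hS0 (by linarith)
    have c2 : ‖E‖ * ‖Linv‖ ≤ ‖Bhat - B‖ * lam0⁻¹ :=
      mul_le_mul hEnorm hLnorm (norm_nonneg _) hc0
    have c3 : (lam0 / 4) * ‖S‖ * lam0⁻¹ = ‖S‖ / 4 := by
      field_simp
    have key : ‖S‖ ≤ ‖S‖ / 4 + ‖Bhat - B‖ * lam0⁻¹ := by linarith
    have hpos : 0 ≤ ‖Bhat - B‖ * lam0⁻¹ := by positivity
    rw [div_eq_mul_inv, mul_assoc]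
    linarith
  have hsp : specNorm (Bhat - B) = ‖Bhat - B‖ := rfl
  rw [hsp]
  exact hgoal
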